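/- If X is a locally connected regular Hausdorff space with no compact component, then the one-point connectification Y = X ∪ {p} (with the topology defined via maximal FIP families D(C) of closed subsets with empty intersection for each component C) is Hausdorff. -/

import Mathlib

open Set

/-- A collection of sets has the finite intersection property if every finite
subcollection has nonempty intersection. -/
def FIP {α : Type*} (D : Set (Set α)) : Prop :=
  ∀ F ⊆ D, F.Finite → (⋂₀ F).Nonempty

/-- `D` is a maximal collection of closed subsets of `C` with the finite
intersection property and empty intersection. -/
def IsMaxFIPFamily {X : Type*} [TopologicalSpace X] (C : Set X) (D : Set (Set X)) : Prop :=
  (∀ A ∈ D, IsClosed A ∧ A ⊆ C) ∧ FIP D ∧ ⋂₀ D = ∅ ∧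
    ∀ D' : Set (Set X), (∀ A ∈ D', IsClosed A ∧ A ⊆ C) → FIP D' → ⋂₀ D' = ∅ →
      D ⊆ D' → D' = D

/-- The open sets of the one-point connectification `Y = X ∪ {p}`, modelled as
`Option X` with `p = none`: (I) sets not containing `none` whose trace on `X` is
open in `X`, and (II) sets containing `none` whose trace on `X` is open in `X`
and which contain (the image of) a member of `𝒟 C` for every connected
component `C` of `X`. -/
def OPOpens {X : Type*} [TopologicalSpace X] (𝒟 : Set X → Set (Set X)) :
    Set (Set (Option X)) :=
  {U | (none ∉ U ∧ IsOpen (some ⁻¹' U)) ∨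
       (none ∈ U ∧ IsOpen (some ⁻¹' U) ∧
         ∀ x : X, ∃ A ∈ 𝒟 (connectedComponent x), some '' A ⊆ U)}

/-- If `X` is a locally connected regular Hausdorff space with no compact component,
then the one-point connectification `Y = X ∪ {p}` is Hausdorff. -/
lemma my_D_nonempty {X : Type*} [TopologicalSpace X] (𝒟 : Set X → Set (Set X))
    (h𝒟 : ∀ x : X, IsMaxFIPFamily (connectedComponent x) (𝒟 (connectedComponent x)))
    (x : X) : ∃ A, A ∈ 𝒟 (connectedComponent x) := by
  by_contra h
  push_neg at h
  have h3 := (h𝒟 x).2.2.1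
  have he : 𝒟 (connectedComponent x) = ∅ := eq_empty_iff_forall_notMem.2 h
  rw [he, sInter_empty] at h3
  exact absurd (h3 ▸ mem_univ x) (notMem_empty x)

lemma my_sep {X : Type*} [TopologicalSpace X] [T3Space X] [LocallyConnectedSpace X]
    (𝒟 : Set X → Set (Set X))
    (h𝒟 : ∀ x : X, IsMaxFIPFamily (connectedComponent x) (𝒟 (connectedComponent x)))
    (z : X) :
    ∃ U V : Set (Option X), U ∈ OPOpens 𝒟 ∧ V ∈ OPOpens 𝒟 ∧ none ∈ U ∧ some z ∈ V ∧
      Disjoint U V := by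
  obtain ⟨hcl, -, h3, -⟩ := h𝒟 z
  have hz : z ∉ ⋂₀ 𝒟 (connectedComponent z) := by rw [h3]; exact notMem_empty z
  simp only [mem_sInter, not_forall] at hz
  obtain ⟨A, hA, hzA⟩ := hz
  obtain ⟨hAcl, hAC⟩ := hcl A hA
  have hsep : SeparatedNhds ({z} : Set X) A := by
    rw [separatedNhds_iff_disjoint, nhdsSet_singleton]
    exact disjoint_nhds_nhdsSet.2 (by rwa [hAcl.closure_eq])
  obtain ⟨u, v, hu, hv, hzu, hAv, huv⟩ := hsep
  have hzu : z ∈ u := hzu rfl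
  have htr : some ⁻¹' (insert none (some '' ((connectedComponent z)ᶜ ∪ v)))
      = (connectedComponent z)ᶜ ∪ v := by
    ext w; simp
  refine ⟨insert none (some '' ((connectedComponent z)ᶜ ∪ v)), some '' (u ∩ connectedComponent z),
    ?_, ?_, mem_insert _ _, ⟨z, ⟨hzu, mem_connectedComponent⟩, rfl⟩, ?_⟩
  · right
    refine ⟨mem_insert _ _, by
      rw [htr]; exact isClosed_connectedComponent.isOpen_compl.union hv, fun x => ?_⟩
    by_cases hx : connectedComponent x = connectedComponent z
    · exact ⟨A, hx ▸ hA, fun a ⟨w, hw, hwe⟩ =>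
        mem_insert_iff.2 (Or.inr ⟨w, Or.inr (hAv hw), hwe⟩)⟩
    · obtain ⟨A', hA'⟩ := my_D_nonempty 𝒟 h𝒟 x
      refine ⟨A', hA', fun a ⟨w, hw, hwe⟩ => mem_insert_iff.2 (Or.inr ⟨w, Or.inl ?_, hwe⟩)⟩
      intro hwC
      have hw' : w ∈ connectedComponent x := ((h𝒟 x).1 A' hA').2 hw
      exact hx ((connectedComponent_eq hw').trans (connectedComponent_eq hwC).symm)
  · left
    refine ⟨by simp, ?_⟩
    have : some ⁻¹' (some '' (u ∩ connectedComponent z)) = u ∩ connectedComponent z := by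
      ext w; simp
    rw [this]; exact hu.inter isOpen_connectedComponent
  · rw [disjoint_left]
    rintro a ha ⟨w, ⟨hwu, hwC⟩, rfl⟩
    rcases mem_insert_iff.1 ha with h | ⟨w', hw', hwe⟩
    · exact Option.some_ne_none w h
    · obtain rfl : w' = w := Option.some_injective X hwe
      rcases hw' with h | h
      · exact h hwC
      · exact disjoint_left.1 huv hwu h

theorem stmt_12 {X : Type*} [TopologicalSpace X] [T3Space X] [LocallyConnectedSpace X]
    (𝒟 : Set X → Set (Set X))
    (hnc : ∀ x : X, ¬ IsCompact (connectedComponent x))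
    (h𝒟 : ∀ x : X, IsMaxFIPFamily (connectedComponent x) (𝒟 (connectedComponent x)))
    (tY : TopologicalSpace (Option X))
    (hopen : ∀ U : Set (Option X), @IsOpen _ tY U ↔ U ∈ OPOpens 𝒟) :
    @T2Space (Option X) tY := by
  refine @T2Space.mk _ tY fun a b hab => ?_
  have sepX : ∀ y z : X, y ≠ z → ∃ u v : Set (Option X),
      @IsOpen _ tY u ∧ @IsOpen _ tY v ∧ some y ∈ u ∧ some z ∈ v ∧ Disjoint u v := by
    intro y z hyz
    obtain ⟨u, v, hu, hv, hyu, hzv, huv⟩ := t2_separation hyz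
    refine ⟨some '' u, some '' v, (hopen _).2 (Or.inl ⟨by simp, by
      rw [Option.some_injective X |>.preimage_image]; exact hu⟩),
      (hopen _).2 (Or.inl ⟨by simp, by
      rw [Option.some_injective X |>.preimage_image]; exact hv⟩),
      mem_image_of_mem _ hyu, mem_image_of_mem _ hzv, ?_⟩
    rw [disjoint_left]
    rintro _ ⟨w, hw, rfl⟩ ⟨w', hw', hwe⟩
    obtain rfl : w' = w := Option.some_injective X hwe
    exact disjoint_left.1 huv hw hw'
  match a, b with
  | none, none => exact absurd rfl hab
  | none, some z =>
    obtain ⟨U, V, hU, hV, hnU, hzV, hUV⟩ := my_sep 𝒟 h𝒟 z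
    exact ⟨U, V, (hopen _).2 hU, (hopen _).2 hV, hnU, hzV, hUV⟩
  | some y, none =>
    obtain ⟨U, V, hU, hV, hnU, hyV, hUV⟩ := my_sep 𝒟 h𝒟 y
    exact ⟨V, U, (hopen _).2 hV, (hopen _).2 hU, hyV, hnU, hUV.symm⟩
  | some y, some z => exact sepX y z (fun h => hab (h ▸ rfl))
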